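/- arXiv:1805.10676 — 2 statements merged into one kernel-verified Lean document; each statement's English description precedes it below -/
import Mathlib

section
/- For every ε > 0, every n-vertex graph G with δ(G) ≥ (1/2 + ε)n, and every pair of distinct vertices x, y of G, the number of walks x v₁ v₂ v₃ v₄ y in G (i.e., 6-term sequences of vertices starting at x and ending at y in which consecutive entries are adjacent) is at least (ε/4)·n⁴. -/
open Finset

namespace RAG

/-- The candidate edges of the complete graph on `Fin n`. -/
def cands (n : ℕ) : Finset (Sym2 (Fin n)) := Finset.univ.filter (fun e => ¬ e.IsDiag)

open Classical in
/-- The probability that the binomial random graph `G(n,p)` satisfies the predicate `P`. -/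
noncomputable def prG (n : ℕ) (p : ℝ) (P : SimpleGraph (Fin n) → Prop) : ℝ :=
  ∑ E ∈ (cands n).powerset,
    if P (SimpleGraph.fromEdgeSet (E : Set (Sym2 (Fin n)))) then
      p ^ E.card * (1 - p) ^ ((cands n).card - E.card) else 0

/-- The degree of a vertex. -/
noncomputable def deg {V : Type*} (G : SimpleGraph V) (v : V) : ℕ := (G.neighborSet v).ncard

/-- A `k`-walk (the `k`-th power of a walk): any two entries whose positions differ
by at most `k` are adjacent. -/
def IsPowWalk {V : Type*} (G : SimpleGraph V) (k : ℕ) (vs : List V) : Prop :=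
  ∀ i j : Fin vs.length, (i : ℕ) < j → (j : ℕ) ≤ i + k → G.Adj (vs.get i) (vs.get j)

/-- A `k`-path (the `k`-th power of a path): distinct vertices, and any two entries whose
positions differ by at most `k` are adjacent. -/
def IsPowPath {V : Type*} (G : SimpleGraph V) (k : ℕ) (vs : List V) : Prop :=
  vs.Nodup ∧ IsPowWalk G k vs

/-- An ordered clique: a list of distinct, pairwise adjacent vertices. -/
def IsOrdClique {V : Type*} (G : SimpleGraph V) (K : List V) : Prop :=
  K.Nodup ∧ K.Pairwise G.Adj

/-- The `k`-th power of a graph. -/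
def gpow {V : Type*} (H : SimpleGraph V) (k : ℕ) : SimpleGraph V where
  Adj u v := u ≠ v ∧ H.Reachable u v ∧ H.dist u v ≤ k
  symm := ⟨fun u v ⟨h1, h2, h3⟩ => ⟨h1.symm, h2.symm, by rwa [SimpleGraph.dist_comm]⟩⟩
  loopless := ⟨fun v h => h.1 rfl⟩

/-- `H` contains the `m`-th power of a Hamiltonian cycle. -/
def HasHamCyclePow (n : ℕ) (H : SimpleGraph (Fin n)) (m : ℕ) : Prop :=
  ∃ σ : Fin n ≃ Fin n, ∀ u v : Fin n,
    (gpow (SimpleGraph.cycleGraph n) m).Adj u v → H.Adj (σ u) (σ v)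

/-- Joint neighbourhood of a set of vertices. -/
def jN {V : Type*} (G : SimpleGraph V) (J : Finset V) : Set V := {v | ∀ u ∈ J, G.Adj u v}

/-- Number of edges between two (disjoint) vertex sets, counted as pairs `(a, b) ∈ A × B`. -/
noncomputable def eB {V : Type*} (G : SimpleGraph V) (A B : Finset V) : ℕ :=
  ({pq : V × V | pq.1 ∈ A ∧ pq.2 ∈ B ∧ G.Adj pq.1 pq.2}).ncard

/-- Edge density between two vertex sets. -/
noncomputable def dens {V : Type*} (G : SimpleGraph V) (A B : Finset V) : ℝ :=
  (eB G A B : ℝ) / ((A.card : ℝ) * (B.card : ℝ))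

/-- `(δ, d)`-quasirandomness of the pair `(A, B)`. -/
def IsQRd {V : Type*} (G : SimpleGraph V) (δ d : ℝ) (A B : Finset V) : Prop :=
  ∀ X ⊆ A, ∀ Y ⊆ B,
    |(eB G X Y : ℝ) - d * (X.card : ℝ) * (Y.card : ℝ)| ≤ δ * (A.card : ℝ) * (B.card : ℝ)

/-- `δ`-quasirandomness of the pair `(A, B)`. -/
def IsQR {V : Type*} (G : SimpleGraph V) (δ : ℝ) (A B : Finset V) : Prop :=
  IsQRd G δ (dens G A B) A B

/-- The graph `K_r` minus one edge (the edge between the first two vertices). -/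
def Krm (r : ℕ) : SimpleGraph (Fin r) :=
  (⊤ : SimpleGraph (Fin r)) \
    SimpleGraph.fromEdgeSet {e | ∃ a b : Fin r, (a : ℕ) = 0 ∧ (b : ℕ) = 1 ∧ e = s(a, b)}

/-- The graph `P⁻`: the `(k+1)`-st power of the path on `2k+2` vertices with the middle
edge removed. -/
def Pminus (k : ℕ) : SimpleGraph (Fin (2 * k + 2)) :=
  gpow (SimpleGraph.pathGraph (2 * k + 2)) (k + 1) \
    SimpleGraph.fromEdgeSet {s(⟨k, by omega⟩, ⟨k + 1, by omega⟩)}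

end RAG

/-- Counting walks with four internal vertices between two fixed vertices. -/
theorem statement_10 (ε : ℝ) (hε : 0 < ε) (n : ℕ) (G : SimpleGraph (Fin n))
    (hdeg : ∀ v : Fin n, (1/2 + ε) * n ≤ (RAG.deg G v : ℝ)) (x y : Fin n) (hxy : x ≠ y) :
    ε/4 * (n : ℝ)^4 ≤ (({f : Fin 4 → Fin n |
      G.Adj x (f 0) ∧ G.Adj (f 0) (f 1) ∧ G.Adj (f 1) (f 2) ∧ G.Adj (f 2) (f 3) ∧
        G.Adj (f 3) y}).ncard : ℝ) := by
  classical
  set N := G.neighborFinset with hN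
  have hdeg' : ∀ v : Fin n, (1/2 + ε) * n ≤ ((N v).card : ℝ) := by
    intro v
    have h := hdeg v
    have : (RAG.deg G v : ℝ) = ((N v).card : ℝ) := by
      norm_cast
      simp [RAG.deg, hN, SimpleGraph.neighborFinset_def, Set.ncard_eq_toFinset_card']
    linarith [h, this.symm.le, this.le]
  have hn0 : (0 : ℝ) ≤ n := Nat.cast_nonneg n
  have hhalf : ∀ v : Fin n, (n : ℝ)/2 ≤ ((N v).card : ℝ) := by
    intro v
    have := hdeg' v
    nlinarith
  have hcommon : ∀ b d : Fin n, 2*ε*(n:ℝ) ≤ ((N b ∩ N d).card : ℝ) := by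
    intro b d
    have h1 := hdeg' b
    have h2 := hdeg' d
    have hu : ((N b ∪ N d).card : ℝ) ≤ (n : ℝ) := by
      have : (N b ∪ N d).card ≤ n := by
        simpa using Finset.card_le_card (Finset.subset_univ (N b ∪ N d))
      exact_mod_cast this
    have hiu : ((N b ∩ N d).card : ℝ) + ((N b ∪ N d).card : ℝ)
        = ((N b).card : ℝ) + ((N d).card : ℝ) := by
      exact_mod_cast congrArg (Nat.cast (R := ℝ)) (Finset.card_inter_add_card_union (N b) (N d))
    nlinarith
  -- the target finset
  set S : Finset (Fin 4 → Fin n) := Finset.univ.filter (fun f =>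
    G.Adj x (f 0) ∧ G.Adj (f 0) (f 1) ∧ G.Adj (f 1) (f 2) ∧ G.Adj (f 2) (f 3) ∧
      G.Adj (f 3) y) with hS
  have hset : ({f : Fin 4 → Fin n |
      G.Adj x (f 0) ∧ G.Adj (f 0) (f 1) ∧ G.Adj (f 1) (f 2) ∧ G.Adj (f 2) (f 3) ∧
        G.Adj (f 3) y} : Set (Fin 4 → Fin n)) = ↑S := by
    ext f; simp [hS]
  rw [hset, Set.ncard_coe_finset]
  -- the sigma finset of choices
  set T : Finset ((_ : Fin n) × (_ : Fin n) × (_ : Fin n) × Fin n) :=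
    (N x).sigma (fun a => (N a).sigma (fun b => (N y).sigma (fun d => N b ∩ N d))) with hT
  have hinj : ∀ t ∈ T, ∀ t' ∈ T,
      (![t.1, t.2.1, t.2.2.2, t.2.2.1] : Fin 4 → Fin n) = ![t'.1, t'.2.1, t'.2.2.2, t'.2.2.1]
      → t = t' := by
    rintro ⟨a, b, d, c⟩ _ ⟨a', b', d', c'⟩ _ h
    have h0 := congrFun h 0
    have h1 := congrFun h 1
    have h2 := congrFun h 2
    have h3 := congrFun h 3
    simp only [Matrix.cons_val_zero, Matrix.cons_val_one, Matrix.head_cons,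
      Matrix.cons_val_two, Matrix.tail_cons, Matrix.cons_val_three] at h0 h1 h2 h3
    subst h0; subst h1; subst h2; subst h3
    rfl
  have hmaps : ∀ t ∈ T, (![t.1, t.2.1, t.2.2.2, t.2.2.1] : Fin 4 → Fin n) ∈ S := by
    rintro ⟨a, b, d, c⟩ ht
    simp only [hT, Finset.mem_sigma, SimpleGraph.mem_neighborFinset, Finset.mem_inter, hN] at ht
    obtain ⟨hxa, hab, hyd, hbc, hdc⟩ := ht
    simp [hS, Matrix.cons_val_zero, Matrix.cons_val_one, Matrix.head_cons]
    exact ⟨hxa, hab, hbc, hdc.symm, hyd.symm⟩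
  have hcard : T.card ≤ S.card :=
    Finset.card_le_card_of_injOn _ hmaps hinj
  have hTcard : (T.card : ℝ) = ∑ a ∈ N x, ∑ b ∈ N a, ∑ d ∈ N y, ((N b ∩ N d).card : ℝ) := by
    simp [hT, Finset.card_sigma]
  have hεn : (0:ℝ) ≤ 2*ε*n := by positivity
  have hsum3 : ∀ b : Fin n, (n:ℝ)/2 * (2*ε*n) ≤ ∑ d ∈ N y, ((N b ∩ N d).card : ℝ) := by
    intro b
    have h1 : ((N y).card : ℝ) * (2*ε*n) ≤ ∑ d ∈ N y, ((N b ∩ N d).card : ℝ) := by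
      have := Finset.card_nsmul_le_sum (N y) (fun d => ((N b ∩ N d).card : ℝ)) (2*ε*n)
        (fun d _ => hcommon b d)
      simpa [nsmul_eq_mul] using this
    exact le_trans (mul_le_mul_of_nonneg_right (hhalf y) hεn) h1
  have hsum2 : ∀ a : Fin n, (n:ℝ)/2 * ((n:ℝ)/2 * (2*ε*n)) ≤
      ∑ b ∈ N a, ∑ d ∈ N y, ((N b ∩ N d).card : ℝ) := by
    intro a
    have h1 : ((N a).card : ℝ) * ((n:ℝ)/2 * (2*ε*n)) ≤
        ∑ b ∈ N a, ∑ d ∈ N y, ((N b ∩ N d).card : ℝ) := by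
      have := Finset.card_nsmul_le_sum (N a)
        (fun b => ∑ d ∈ N y, ((N b ∩ N d).card : ℝ)) ((n:ℝ)/2 * (2*ε*n))
        (fun b _ => hsum3 b)
      simpa [nsmul_eq_mul] using this
    exact le_trans (mul_le_mul_of_nonneg_right (hhalf a) (by positivity)) h1
  have hsum1 : (n:ℝ)/2 * ((n:ℝ)/2 * ((n:ℝ)/2 * (2*ε*n))) ≤ (T.card : ℝ) := by
    rw [hTcard]
    have h1 : ((N x).card : ℝ) * ((n:ℝ)/2 * ((n:ℝ)/2 * (2*ε*n))) ≤
        ∑ a ∈ N x, ∑ b ∈ N a, ∑ d ∈ N y, ((N b ∩ N d).card : ℝ) := by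
      have := Finset.card_nsmul_le_sum (N x)
        (fun a => ∑ b ∈ N a, ∑ d ∈ N y, ((N b ∩ N d).card : ℝ))
        ((n:ℝ)/2 * ((n:ℝ)/2 * (2*ε*n))) (fun a _ => hsum2 a)
      simpa [nsmul_eq_mul] using this
    exact le_trans (mul_le_mul_of_nonneg_right (hhalf x) (by positivity)) h1
  have hTS : (T.card : ℝ) ≤ (S.card : ℝ) := by exact_mod_cast hcard
  nlinarith [hsum1, hTS]
end

section
/- (Counting Lemma) Let δ > 0, let F be a graph with vertex set [f] = {1,…,f}, and let G be a graph with a partition V(G) = V₁ ∪ … ∪ V_f into pairwise disjoint sets such that the pair (V_i, V_j) is δ-quasirandom whenever ij is an edge of F. For ij ∈ E(F) let d_{ij} = e(V_i,V_j)/(|V_i||V_j|) be the density of (V_i,V_j) (set to 0 if V_i or V_j is empty). Then the number of f-tuples (v₁,…,v_f) ∈ V₁ × ⋯ × V_f such that v_i v_j is an edge of G whenever ij ∈ E(F) differs from (∏_{ij ∈ E(F)} d_{ij}) · ∏_{i=1}^f |V_i| by at most e(F) · δ · ∏_{i=1}^f |V_i|. -/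
open Finset

set_option linter.unusedSectionVars false
set_option linter.unusedVariables false
set_option maxHeartbeats 1000000

namespace CL
variable {V : Type*} [Fintype V] {f : ℕ}

open Classical in
noncomputable def cnt (G : SimpleGraph V) (Vs : Fin f → Finset V)
    (S : Finset (Fin f × Fin f)) : ℕ :=
  (Finset.univ.filter (fun g : Fin f → V =>
    (∀ k, g k ∈ Vs k) ∧ ∀ p ∈ S, G.Adj (g p.1) (g p.2))).card

open Classical in
lemma cnt_cast (G : SimpleGraph V) (Vs : Fin f → Finset V) (S : Finset (Fin f × Fin f)) :
    (cnt G Vs S : ℝ) = ∑ g : Fin f → V,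
      (∏ k, if g k ∈ Vs k then (1:ℝ) else 0) *
        ∏ p ∈ S, if G.Adj (g p.1) (g p.2) then (1:ℝ) else 0 := by
  rw [cnt, Finset.card_filter]
  push_cast
  refine Finset.sum_congr rfl fun g _ => ?_
  rw [Finset.prod_boole, Finset.prod_boole]
  by_cases h1 : ∀ k, g k ∈ Vs k <;>
    by_cases h2 : ∀ p ∈ S, G.Adj (g p.1) (g p.2) <;> simp [h1, h2]

open Classical in
lemma eB_cast (G : SimpleGraph V) (A B : Finset V) :
    (RAG.eB G A B : ℝ) = ∑ x ∈ A, ∑ y ∈ B, if G.Adj x y then (1:ℝ) else 0 := by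
  have hset : {pq : V × V | pq.1 ∈ A ∧ pq.2 ∈ B ∧ G.Adj pq.1 pq.2}
      = ↑((A ×ˢ B).filter (fun pq => G.Adj pq.1 pq.2)) := by
    ext ⟨x, y⟩
    simp [Finset.mem_filter, Finset.mem_product, and_assoc]
  rw [RAG.eB, hset, Set.ncard_coe_finset, Finset.card_filter]
  push_cast
  rw [Finset.sum_product]

lemma dens_nonneg (G : SimpleGraph V) (A B : Finset V) : 0 ≤ RAG.dens G A B :=
  div_nonneg (Nat.cast_nonneg _) (by positivity)

lemma dens_le_one (G : SimpleGraph V) (A B : Finset V) : RAG.dens G A B ≤ 1 := by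
  classical
  apply div_le_one_of_le₀ _ (by positivity)
  rw [eB_cast]
  calc (∑ x ∈ A, ∑ y ∈ B, if G.Adj x y then (1:ℝ) else 0)
      ≤ ∑ x ∈ A, ∑ y ∈ B, (1:ℝ) := by
        refine Finset.sum_le_sum fun x _ => Finset.sum_le_sum fun y _ => ?_
        split <;> norm_num
    _ = (A.card : ℝ) * (B.card : ℝ) := by simp [mul_comm]

def recomb (i j : Fin f) (h : {k : Fin f // k ≠ i ∧ k ≠ j} → V) (x y : V) : Fin f → V :=
  fun k => if hk : k = i then x else if hk2 : k = j then y else h ⟨k, hk, hk2⟩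

lemma recomb_i (i j : Fin f) (h : {k : Fin f // k ≠ i ∧ k ≠ j} → V) (x y : V) :
    recomb i j h x y i = x := dif_pos rfl

lemma recomb_j {i j : Fin f} (hne : i ≠ j) (h : {k : Fin f // k ≠ i ∧ k ≠ j} → V) (x y : V) :
    recomb i j h x y j = y := by
  rw [recomb, dif_neg hne.symm, dif_pos rfl]

lemma recomb_other (i j : Fin f) (h : {k : Fin f // k ≠ i ∧ k ≠ j} → V) (x y : V)
    (k : Fin f) (hk : k ≠ i) (hk2 : k ≠ j) :
    recomb i j h x y k = h ⟨k, hk, hk2⟩ := by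
  rw [recomb, dif_neg hk, dif_neg hk2]

lemma recomb_indep_y (i j : Fin f) (h : {k : Fin f // k ≠ i ∧ k ≠ j} → V) (x y y' : V)
    (k : Fin f) (hk : k ≠ j) : recomb i j h x y k = recomb i j h x y' k := by
  by_cases hki : k = i
  · subst hki; rw [recomb_i, recomb_i]
  · rw [recomb_other i j h x y k hki hk, recomb_other i j h x y' k hki hk]

lemma recomb_indep_x (i j : Fin f) (h : {k : Fin f // k ≠ i ∧ k ≠ j} → V) (x x' y : V)
    (k : Fin f) (hk : k ≠ i) : recomb i j h x y k = recomb i j h x' y k := by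
  by_cases hkj : k = j
  · subst hkj; rw [recomb_j (fun e => hk e.symm), recomb_j (fun e => hk e.symm)]
  · rw [recomb_other i j h x y k hk hkj, recomb_other i j h x' y k hk hkj]

def recombEquiv (i j : Fin f) (hne : i ≠ j) :
    (({k : Fin f // k ≠ i ∧ k ≠ j} → V) × V × V) ≃ (Fin f → V) where
  toFun t := recomb i j t.1 t.2.1 t.2.2
  invFun g := (fun k => g k.1, g i, g j)
  left_inv := by
    rintro ⟨h, x, y⟩
    refine Prod.ext (funext fun k => ?_) (Prod.ext ?_ ?_)
    · show recomb i j h x y k.1 = h k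
      rw [recomb_other i j h x y k.1 k.2.1 k.2.2]
    · exact recomb_i i j h x y
    · exact recomb_j hne h x y
  right_inv := by
    intro g; funext k
    show recomb i j (fun k' => g k'.1) (g i) (g j) k = g k
    by_cases hk : k = i
    · subst hk; exact recomb_i _ _ _ _ _
    · by_cases hk2 : k = j
      · subst hk2; exact recomb_j hne _ _ _
      · exact recomb_other _ _ _ _ _ k hk hk2

open Classical in
lemma keystep (G : SimpleGraph V) (Vs : Fin f → Finset V) (i j : Fin f) (hij : i < j)
    (S : Finset (Fin f × Fin f)) (hS : ∀ p ∈ S, p.1 < p.2) (hnot : (i, j) ∉ S)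
    (δ : ℝ) (hδ : 0 ≤ δ) (hq : RAG.IsQR G δ (Vs i) (Vs j)) :
    |(cnt G Vs (insert (i, j) S) : ℝ) -
      RAG.dens G (Vs i) (Vs j) * (cnt G Vs S : ℝ)| ≤ δ * ∏ k, ((Vs k).card : ℝ) := by
  have hne : i ≠ j := ne_of_lt hij
  rcases isEmpty_or_nonempty V with hV | hV
  · haveI : IsEmpty (Fin f → V) := ⟨fun g => IsEmpty.false (g i)⟩
    have h0 : ∀ S' : Finset (Fin f × Fin f), cnt G Vs S' = 0 := by
      intro S'; rw [cnt]; simp [Finset.univ_eq_empty]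
    have hVi : Vs i = ∅ := Finset.eq_empty_of_isEmpty _
    have hprod : ∏ k, ((Vs k).card : ℝ) = 0 :=
      Finset.prod_eq_zero (Finset.mem_univ i) (by simp [hVi])
    rw [h0, h0, hprod]
    simp
  obtain ⟨v0⟩ := hV
  set Si : Finset (Fin f × Fin f) := S.filter (fun p => p.1 = i ∨ p.2 = i) with hSi_def
  set Sj : Finset (Fin f × Fin f) :=
    (S.filter (fun p => ¬(p.1 = i ∨ p.2 = i))).filter (fun p => p.1 = j ∨ p.2 = j) with hSj_def
  set S0 : Finset (Fin f × Fin f) :=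
    (S.filter (fun p => ¬(p.1 = i ∨ p.2 = i))).filter (fun p => ¬(p.1 = j ∨ p.2 = j)) with hS0_def
  -- membership facts
  have hSi_ne : ∀ p ∈ Si, p.1 ≠ j ∧ p.2 ≠ j := by
    intro p hp
    rw [hSi_def, Finset.mem_filter] at hp
    obtain ⟨hpS, hpi⟩ := hp
    have hlt := hS p hpS
    constructor
    · intro h1
      rcases hpi with h2 | h2
      · exact hne (h2.symm.trans h1)
      · rw [h1, h2] at hlt; exact absurd hij (lt_asymm hlt)
    · intro h1
      rcases hpi with h2 | h2
      · exact hnot (by rw [← h2, ← h1]; exact hpS)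
      · exact hne (h2.symm.trans h1)
  have hSj_ne : ∀ p ∈ Sj, p.1 ≠ i ∧ p.2 ≠ i := by
    intro p hp
    rw [hSj_def, Finset.mem_filter, Finset.mem_filter] at hp
    push_neg at hp
    exact hp.1.2
  have hS0_ne : ∀ p ∈ S0, (p.1 ≠ i ∧ p.2 ≠ i) ∧ p.1 ≠ j ∧ p.2 ≠ j := by
    intro p hp
    rw [hS0_def, Finset.mem_filter, Finset.mem_filter] at hp
    obtain ⟨⟨_, h1⟩, h2⟩ := hp
    push_neg at h1 h2
    exact ⟨h1, h2⟩
  -- the per-h data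
  set X : ({k : Fin f // k ≠ i ∧ k ≠ j} → V) → Finset V := fun h =>
    (Vs i).filter (fun x => ∀ p ∈ Si, G.Adj (recomb i j h x v0 p.1) (recomb i j h x v0 p.2))
    with hX_def
  set Y : ({k : Fin f // k ≠ i ∧ k ≠ j} → V) → Finset V := fun h =>
    (Vs j).filter (fun y => ∀ p ∈ Sj, G.Adj (recomb i j h v0 y p.1) (recomb i j h v0 y p.2))
    with hY_def
  set a : ({k : Fin f // k ≠ i ∧ k ≠ j} → V) → ℝ := fun h =>
    (∏ k ∈ univ \ {i, j}, if recomb i j h v0 v0 k ∈ Vs k then (1:ℝ) else 0) *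
      ∏ p ∈ S0, if G.Adj (recomb i j h v0 v0 p.1) (recomb i j h v0 v0 p.2) then (1:ℝ) else 0
    with ha_def
  have ha_nonneg : ∀ h, 0 ≤ a h := by
    intro h
    apply mul_nonneg <;> exact Finset.prod_nonneg fun _ _ => by positivity
  have ha_le : ∀ h, a h ≤ ∏ k ∈ univ \ {i, j}, if recomb i j h v0 v0 k ∈ Vs k then (1:ℝ) else 0 := by
    intro h
    apply mul_le_of_le_one_right (Finset.prod_nonneg fun _ _ => by positivity)
    apply Finset.prod_le_one (fun _ _ => by positivity) (fun _ _ => by split <;> norm_num)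
  have hXsub : ∀ h, X h ⊆ Vs i := fun h => Finset.filter_subset _ _
  have hYsub : ∀ h, Y h ⊆ Vs j := fun h => Finset.filter_subset _ _
  -- universe split
  have hjmem : j ∉ (univ : Finset (Fin f)) \ {i, j} := by simp
  have himem : i ∉ insert j ((univ : Finset (Fin f)) \ {i, j}) := by simp [hne]
  have huniv : (univ : Finset (Fin f)) = insert i (insert j (univ \ {i, j})) := by
    ext k
    by_cases h1 : k = i <;> by_cases h2 : k = j <;> simp [h1, h2]
  -- decomposition of the weight
  have decomp : ∀ (h : {k : Fin f // k ≠ i ∧ k ≠ j} → V) (x y : V),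
      ((∏ k, if recomb i j h x y k ∈ Vs k then (1:ℝ) else 0) *
        ∏ p ∈ S, if G.Adj (recomb i j h x y p.1) (recomb i j h x y p.2) then (1:ℝ) else 0)
      = a h * ((if x ∈ X h then (1:ℝ) else 0) * (if y ∈ Y h then (1:ℝ) else 0)) := by
    intro h x y
    have hmem : (∏ k, if recomb i j h x y k ∈ Vs k then (1:ℝ) else 0)
        = (if x ∈ Vs i then (1:ℝ) else 0) * ((if y ∈ Vs j then (1:ℝ) else 0) *
            ∏ k ∈ univ \ {i, j}, if recomb i j h v0 v0 k ∈ Vs k then (1:ℝ) else 0) := by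
      conv_lhs => rw [huniv]
      rw [Finset.prod_insert himem, Finset.prod_insert hjmem, recomb_i, recomb_j hne]
      congr 1
      congr 1
      refine Finset.prod_congr rfl fun k hk => ?_
      simp only [Finset.mem_sdiff, Finset.mem_insert, Finset.mem_singleton, not_or] at hk
      rw [recomb_other i j h x y k hk.2.1 hk.2.2, recomb_other i j h v0 v0 k hk.2.1 hk.2.2]
    have hedge : (∏ p ∈ S, if G.Adj (recomb i j h x y p.1) (recomb i j h x y p.2) then (1:ℝ) else 0)
        = (∏ p ∈ Si, if G.Adj (recomb i j h x v0 p.1) (recomb i j h x v0 p.2) then (1:ℝ) else 0) *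
          ((∏ p ∈ Sj, if G.Adj (recomb i j h v0 y p.1) (recomb i j h v0 y p.2) then (1:ℝ) else 0) *
           ∏ p ∈ S0, if G.Adj (recomb i j h v0 v0 p.1) (recomb i j h v0 v0 p.2) then (1:ℝ) else 0) := by
      rw [← Finset.prod_filter_mul_prod_filter_not S (fun p => p.1 = i ∨ p.2 = i),
        ← Finset.prod_filter_mul_prod_filter_not
          (S.filter (fun p => ¬(p.1 = i ∨ p.2 = i))) (fun p => p.1 = j ∨ p.2 = j)]
      congr 1
      · refine Finset.prod_congr rfl fun p hp => ?_
        rw [recomb_indep_y i j h x y v0 p.1 (hSi_ne p hp).1,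
          recomb_indep_y i j h x y v0 p.2 (hSi_ne p hp).2]
      congr 1
      · refine Finset.prod_congr rfl fun p hp => ?_
        rw [recomb_indep_x i j h x v0 y p.1 (hSj_ne p hp).1,
          recomb_indep_x i j h x v0 y p.2 (hSj_ne p hp).2]
      · refine Finset.prod_congr rfl fun p hp => ?_
        rw [recomb_indep_x i j h x v0 y p.1 (hS0_ne p hp).1.1,
          recomb_indep_x i j h x v0 y p.2 (hS0_ne p hp).1.2,
          recomb_indep_y i j h v0 y v0 p.1 (hS0_ne p hp).2.1,
          recomb_indep_y i j h v0 y v0 p.2 (hS0_ne p hp).2.2]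
    have hXind : (if x ∈ Vs i then (1:ℝ) else 0) *
        (∏ p ∈ Si, if G.Adj (recomb i j h x v0 p.1) (recomb i j h x v0 p.2) then (1:ℝ) else 0)
        = (if x ∈ X h then (1:ℝ) else 0) := by
      rw [Finset.prod_boole]
      by_cases h1 : x ∈ Vs i <;>
        by_cases h2 : ∀ p ∈ Si, G.Adj (recomb i j h x v0 p.1) (recomb i j h x v0 p.2) <;>
        simp [hX_def, Finset.mem_filter, h1, h2]
    have hYind : (if y ∈ Vs j then (1:ℝ) else 0) *
        (∏ p ∈ Sj, if G.Adj (recomb i j h v0 y p.1) (recomb i j h v0 y p.2) then (1:ℝ) else 0)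
        = (if y ∈ Y h then (1:ℝ) else 0) := by
      rw [Finset.prod_boole]
      by_cases h1 : y ∈ Vs j <;>
        by_cases h2 : ∀ p ∈ Sj, G.Adj (recomb i j h v0 y p.1) (recomb i j h v0 y p.2) <;>
        simp [hY_def, Finset.mem_filter, h1, h2]
    rw [hmem, hedge, ha_def, ← hXind, ← hYind]
    ring
  -- summation machinery
  have e1 : ∀ (B : Finset V) (u : V → ℝ),
      (∑ y : V, (if y ∈ B then (1:ℝ) else 0) * u y) = ∑ y ∈ B, u y := by
    intro B u
    rw [Finset.sum_congr rfl fun y _ => boole_mul (y ∈ B) (u y),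
      Finset.sum_ite_mem univ B u, Finset.univ_inter]
  have inner : ∀ (A B : Finset V) (t : V → V → ℝ),
      (∑ x : V, ∑ y : V, (if x ∈ A then (1:ℝ) else 0) * (if y ∈ B then (1:ℝ) else 0) * t x y)
        = ∑ x ∈ A, ∑ y ∈ B, t x y := by
    intro A B t
    have h1 : ∀ x : V, (∑ y : V,
        (if x ∈ A then (1:ℝ) else 0) * (if y ∈ B then (1:ℝ) else 0) * t x y)
        = (if x ∈ A then (1:ℝ) else 0) * ∑ y ∈ B, t x y := by
      intro x
      rw [← e1 B (t x), Finset.mul_sum]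
      exact Finset.sum_congr rfl fun y _ => by ring
    rw [Finset.sum_congr rfl fun x _ => h1 x, e1 A (fun x => ∑ y ∈ B, t x y)]
  have hsum_equiv : ∀ (Φ : (Fin f → V) → ℝ), (∑ g : Fin f → V, Φ g)
      = ∑ h : {k : Fin f // k ≠ i ∧ k ≠ j} → V, ∑ x : V, ∑ y : V, Φ (recomb i j h x y) := by
    intro Φ
    rw [← Equiv.sum_comp (recombEquiv i j hne) Φ, Fintype.sum_prod_type]
    refine Finset.sum_congr rfl fun h _ => ?_
    rw [Fintype.sum_prod_type]
    exact Finset.sum_congr rfl fun x _ => Finset.sum_congr rfl fun y _ => rfl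
  -- the two counts
  have cast1 : (cnt G Vs (insert (i, j) S) : ℝ)
      = ∑ h, a h * (RAG.eB G (X h) (Y h) : ℝ) := by
    rw [cnt_cast, hsum_equiv]
    refine Finset.sum_congr rfl fun h _ => ?_
    have key : ∀ x y : V, ((∏ k, if recomb i j h x y k ∈ Vs k then (1:ℝ) else 0) *
        ∏ p ∈ insert (i, j) S,
          if G.Adj (recomb i j h x y p.1) (recomb i j h x y p.2) then (1:ℝ) else 0)
        = (if x ∈ X h then (1:ℝ) else 0) * (if y ∈ Y h then (1:ℝ) else 0) *
            (a h * if G.Adj x y then (1:ℝ) else 0) := by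
      intro x y
      rw [Finset.prod_insert hnot]
      have hxy : (if G.Adj (recomb i j h x y (i, j).1) (recomb i j h x y (i, j).2)
          then (1:ℝ) else 0) = (if G.Adj x y then (1:ℝ) else 0) := by
        rw [show recomb i j h x y (i, j).1 = x from recomb_i i j h x y,
          show recomb i j h x y (i, j).2 = y from recomb_j hne h x y]
      rw [hxy]
      linear_combination (if G.Adj x y then (1:ℝ) else 0) * decomp h x y
    rw [Finset.sum_congr rfl fun x _ => Finset.sum_congr rfl fun y _ => key x y,
      inner (X h) (Y h) (fun x y => a h * if G.Adj x y then (1:ℝ) else 0),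
      eB_cast G (X h) (Y h), Finset.mul_sum]
    refine Finset.sum_congr rfl fun x _ => ?_
    rw [Finset.mul_sum]
  have cast2 : (cnt G Vs S : ℝ)
      = ∑ h, a h * (((X h).card : ℝ) * ((Y h).card : ℝ)) := by
    rw [cnt_cast, hsum_equiv]
    refine Finset.sum_congr rfl fun h _ => ?_
    have key : ∀ x y : V, ((∏ k, if recomb i j h x y k ∈ Vs k then (1:ℝ) else 0) *
        ∏ p ∈ S, if G.Adj (recomb i j h x y p.1) (recomb i j h x y p.2) then (1:ℝ) else 0)
        = (if x ∈ X h then (1:ℝ) else 0) * (if y ∈ Y h then (1:ℝ) else 0) * a h := by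
      intro x y
      linear_combination decomp h x y
    rw [Finset.sum_congr rfl fun x _ => Finset.sum_congr rfl fun y _ => key x y,
      inner (X h) (Y h) (fun _ _ => a h), Finset.sum_const, Finset.sum_const,
      nsmul_eq_mul, nsmul_eq_mul]
    ring
  have hdiff : (cnt G Vs (insert (i, j) S) : ℝ)
      - RAG.dens G (Vs i) (Vs j) * (cnt G Vs S : ℝ)
      = ∑ h, a h * ((RAG.eB G (X h) (Y h) : ℝ)
          - RAG.dens G (Vs i) (Vs j) * ((X h).card : ℝ) * ((Y h).card : ℝ)) := by
    rw [cast1, cast2, Finset.mul_sum, ← Finset.sum_sub_distrib]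
    exact Finset.sum_congr rfl fun h _ => by ring
  have hbound : ∀ h, |a h * ((RAG.eB G (X h) (Y h) : ℝ)
        - RAG.dens G (Vs i) (Vs j) * ((X h).card : ℝ) * ((Y h).card : ℝ))|
      ≤ (∏ k ∈ univ \ {i, j}, if recomb i j h v0 v0 k ∈ Vs k then (1:ℝ) else 0) *
          (δ * ((Vs i).card : ℝ) * ((Vs j).card : ℝ)) := by
    intro h
    rw [abs_mul, abs_of_nonneg (ha_nonneg h)]
    refine le_trans (mul_le_mul_of_nonneg_left
      (hq (X h) (hXsub h) (Y h) (hYsub h)) (ha_nonneg h)) ?_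
    exact mul_le_mul_of_nonneg_right (ha_le h)
      (mul_nonneg (mul_nonneg hδ (Nat.cast_nonneg _)) (Nat.cast_nonneg _))
  have hmem_iff : ∀ k : Fin f, k ∈ univ \ ({i, j} : Finset (Fin f)) ↔ (k ≠ i ∧ k ≠ j) := by
    intro k; simp [not_or]
  have hsum_m : (∑ h : {k : Fin f // k ≠ i ∧ k ≠ j} → V,
        ∏ k ∈ univ \ {i, j}, if recomb i j h v0 v0 k ∈ Vs k then (1:ℝ) else 0)
      = ∏ k ∈ univ \ {i, j}, ((Vs k).card : ℝ) := by
    have hsub : ∀ (h : {k : Fin f // k ≠ i ∧ k ≠ j} → V),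
        (∏ k ∈ univ \ {i, j}, if recomb i j h v0 v0 k ∈ Vs k then (1:ℝ) else 0)
        = ∏ k : {k : Fin f // k ≠ i ∧ k ≠ j}, if h k ∈ Vs k.1 then (1:ℝ) else 0 := by
      intro h
      rw [Finset.prod_subtype (univ \ {i, j}) hmem_iff
        (fun k => if recomb i j h v0 v0 k ∈ Vs k then (1:ℝ) else 0)]
      refine Finset.prod_congr rfl fun k _ => ?_
      rw [recomb_other i j h v0 v0 k.1 k.2.1 k.2.2]
    rw [Finset.sum_congr rfl fun h _ => hsub h]
    have hps := Finset.prod_univ_sum (fun _ : {k : Fin f // k ≠ i ∧ k ≠ j} => (univ : Finset V))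
      (fun k v => if v ∈ Vs k.1 then (1:ℝ) else 0)
    rw [Fintype.piFinset_univ] at hps
    rw [← hps]
    rw [show (∏ k : {k : Fin f // k ≠ i ∧ k ≠ j}, ∑ v : V, if v ∈ Vs k.1 then (1:ℝ) else 0)
        = ∏ k : {k : Fin f // k ≠ i ∧ k ≠ j}, ((Vs k.1).card : ℝ) from
      Finset.prod_congr rfl fun k _ => by rw [Finset.sum_boole]; simp]
    exact (Finset.prod_subtype (univ \ {i, j}) hmem_iff (fun k => ((Vs k).card : ℝ))).symm
  have hfinal : (∏ k, ((Vs k).card : ℝ)) = ((Vs i).card : ℝ) *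
      (((Vs j).card : ℝ) * ∏ k ∈ univ \ {i, j}, ((Vs k).card : ℝ)) := by
    conv_lhs => rw [huniv]
    rw [Finset.prod_insert himem, Finset.prod_insert hjmem]
  rw [hdiff]
  refine le_trans (Finset.abs_sum_le_sum_abs _ _) ?_
  refine le_trans (Finset.sum_le_sum fun h _ => hbound h) ?_
  rw [← Finset.sum_mul, hsum_m, hfinal]
  exact le_of_eq (by ring)

open Classical in
lemma count_lemma (G : SimpleGraph V) (Vs : Fin f → Finset V) (δ : ℝ) (hδ : 0 ≤ δ)
    (S : Finset (Fin f × Fin f)) :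
    (∀ p ∈ S, p.1 < p.2) → (∀ p ∈ S, RAG.IsQR G δ (Vs p.1) (Vs p.2)) →
    |(cnt G Vs S : ℝ) - (∏ p ∈ S, RAG.dens G (Vs p.1) (Vs p.2)) * ∏ k, ((Vs k).card : ℝ)|
      ≤ (S.card : ℝ) * δ * ∏ k, ((Vs k).card : ℝ) := by
  induction S using Finset.induction_on with
  | empty =>
    intro _ _
    have hcnt : cnt G Vs (∅ : Finset (Fin f × Fin f)) = ∏ k, (Vs k).card := by
      rw [cnt, show Finset.univ.filter (fun g : Fin f → V => (∀ k, g k ∈ Vs k) ∧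
          ∀ p ∈ (∅ : Finset (Fin f × Fin f)), G.Adj (g p.1) (g p.2)) = Fintype.piFinset Vs
        from by ext g; simp [Fintype.mem_piFinset]]
      exact Fintype.card_piFinset Vs
    rw [hcnt]
    push_cast
    simp
  | @insert p S' hp ih =>
    intro hS hqr
    obtain ⟨i, j⟩ := p
    have hij : i < j := hS (i, j) (Finset.mem_insert_self _ _)
    have hS' : ∀ q ∈ S', q.1 < q.2 := fun q hq => hS q (Finset.mem_insert_of_mem hq)
    have hqr' : ∀ q ∈ S', RAG.IsQR G δ (Vs q.1) (Vs q.2) :=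
      fun q hq => hqr q (Finset.mem_insert_of_mem hq)
    have hks := keystep G Vs i j hij S' hS' hp δ hδ (hqr (i, j) (Finset.mem_insert_self _ _))
    have ihh := ih hS' hqr'
    have hd0 : 0 ≤ RAG.dens G (Vs i) (Vs j) := dens_nonneg G _ _
    have hd1 : RAG.dens G (Vs i) (Vs j) ≤ 1 := dens_le_one G _ _
    rw [Finset.prod_insert hp, Finset.card_insert_of_notMem hp]
    have habs : |(cnt G Vs (insert (i, j) S') : ℝ) -
          (RAG.dens G (Vs i) (Vs j) * ∏ q ∈ S', RAG.dens G (Vs q.1) (Vs q.2)) *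
            ∏ k, ((Vs k).card : ℝ)|
        ≤ |(cnt G Vs (insert (i, j) S') : ℝ) -
              RAG.dens G (Vs i) (Vs j) * (cnt G Vs S' : ℝ)|
          + RAG.dens G (Vs i) (Vs j) * |(cnt G Vs S' : ℝ) -
              (∏ q ∈ S', RAG.dens G (Vs q.1) (Vs q.2)) * ∏ k, ((Vs k).card : ℝ)| := by
      have h3 := abs_add_le
        ((cnt G Vs (insert (i, j) S') : ℝ) - RAG.dens G (Vs i) (Vs j) * (cnt G Vs S' : ℝ))
        (RAG.dens G (Vs i) (Vs j) * ((cnt G Vs S' : ℝ) -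
          (∏ q ∈ S', RAG.dens G (Vs q.1) (Vs q.2)) * ∏ k, ((Vs k).card : ℝ)))
      rw [abs_mul, abs_of_nonneg hd0] at h3
      have heq : (cnt G Vs (insert (i, j) S') : ℝ) -
          (RAG.dens G (Vs i) (Vs j) * ∏ q ∈ S', RAG.dens G (Vs q.1) (Vs q.2)) *
            ∏ k, ((Vs k).card : ℝ)
          = ((cnt G Vs (insert (i, j) S') : ℝ) -
              RAG.dens G (Vs i) (Vs j) * (cnt G Vs S' : ℝ))
            + RAG.dens G (Vs i) (Vs j) * ((cnt G Vs S' : ℝ) -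
              (∏ q ∈ S', RAG.dens G (Vs q.1) (Vs q.2)) * ∏ k, ((Vs k).card : ℝ)) := by ring
      rw [heq]
      exact h3
    refine le_trans habs ?_
    have h2 : RAG.dens G (Vs i) (Vs j) * |(cnt G Vs S' : ℝ) -
          (∏ q ∈ S', RAG.dens G (Vs q.1) (Vs q.2)) * ∏ k, ((Vs k).card : ℝ)|
        ≤ 1 * ((S'.card : ℝ) * δ * ∏ k, ((Vs k).card : ℝ)) :=
      mul_le_mul hd1 ihh (abs_nonneg _) zero_le_one
    refine le_trans (add_le_add hks h2) ?_
    push_cast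
    exact le_of_eq (by ring)

end CL

open Classical in
/-- Counting Lemma. -/
theorem statement_15 {V : Type*} [Fintype V] (δ : ℝ) (hδ : 0 < δ) (f : ℕ)
    (F : SimpleGraph (Fin f)) (G : SimpleGraph V) (Vs : Fin f → Finset V)
    (hdisj : ∀ i j, i ≠ j → Disjoint (Vs i) (Vs j))
    (hcover : ∀ v : V, ∃ i, v ∈ Vs i)
    (hqr : ∀ i j, F.Adj i j → RAG.IsQR G δ (Vs i) (Vs j)) :
    |(({g : Fin f → V | (∀ i, g i ∈ Vs i) ∧
          ∀ i j, F.Adj i j → G.Adj (g i) (g j)}).ncard : ℝ) -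
      (∏ e ∈ Finset.univ.filter (fun e : Fin f × Fin f => e.1 < e.2 ∧ F.Adj e.1 e.2),
        RAG.dens G (Vs e.1) (Vs e.2)) * ∏ i, ((Vs i).card : ℝ)| ≤
      ((Finset.univ.filter (fun e : Fin f × Fin f => e.1 < e.2 ∧ F.Adj e.1 e.2)).card : ℝ) *
        δ * ∏ i, ((Vs i).card : ℝ) := by
  classical
  set S₀ : Finset (Fin f × Fin f) :=
    Finset.univ.filter (fun e : Fin f × Fin f => e.1 < e.2 ∧ F.Adj e.1 e.2) with hS₀_def
  have hS₀ : ∀ p ∈ S₀, p.1 < p.2 := fun p hp => (Finset.mem_filter.mp hp).2.1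
  have hqr₀ : ∀ p ∈ S₀, RAG.IsQR G δ (Vs p.1) (Vs p.2) :=
    fun p hp => hqr p.1 p.2 (Finset.mem_filter.mp hp).2.2
  have hsetq : {g : Fin f → V | (∀ i, g i ∈ Vs i) ∧ ∀ i j, F.Adj i j → G.Adj (g i) (g j)}
      = ↑(Finset.univ.filter (fun g : Fin f → V =>
          (∀ k, g k ∈ Vs k) ∧ ∀ p ∈ S₀, G.Adj (g p.1) (g p.2))) := by
    ext g
    simp only [Set.mem_setOf_eq, Finset.coe_filter, Finset.mem_univ, true_and]
    constructor
    · rintro ⟨h1, h2⟩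
      exact ⟨h1, fun p hp => h2 p.1 p.2 (Finset.mem_filter.mp hp).2.2⟩
    · rintro ⟨h1, h2⟩
      refine ⟨h1, fun i j hadj => ?_⟩
      rcases lt_trichotomy i j with hlt | heq | hgt
      · exact h2 (i, j) (Finset.mem_filter.mpr ⟨Finset.mem_univ _, hlt, hadj⟩)
      · subst heq; exact (F.irrefl hadj).elim
      · exact (h2 (j, i) (Finset.mem_filter.mpr ⟨Finset.mem_univ _, hgt, hadj.symm⟩)).symm
  rw [hsetq, Set.ncard_coe_finset]
  exact CL.count_lemma G Vs δ hδ.le S₀ hS₀ hqr₀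
end
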